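/- Let (X, A) be an A-metric space and f : X → X an AZ mapping with constants a ∈ [0,1), b, c ∈ [0, 1/t). If for a pair x, y ∈ X condition (AZ2) holds, i.e., A(fx,...,fx,fy) ≤ b[A(fx,...,fx,x) + A(fy,...,fy,y)], then A(fx,...,fx,fy) ≤ (b/(1−b(t−1)))·A(x,...,x,y) + (tb/(1−b(t−1)))·A(fx,...,fx,x). -/

import Mathlib

open Finset Filter

def Amet {X : Type*} {t : ℕ} (A : (Fin t → X) → ℝ) (x y : X) : ℝ :=
  A (fun j => if (j : ℕ) = t - 1 then y else x)

theorem stmt18 {X : Type*} {t : ℕ} (ht : 2 ≤ t) (A : (Fin t → X) → ℝ)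
    (hA1 : ∀ v, 0 ≤ A v)
    (hA2 : ∀ v, A v = 0 ↔ ∀ i j, v i = v j)
    (hA3 : ∀ (v : Fin t → X) (y : X), A v ≤ ∑ i, Amet A (v i) y)
    (f : X → X) (a b c : ℝ)
    (ha : 0 ≤ a ∧ a < 1) (hb : 0 ≤ b ∧ b < 1 / t) (hc : 0 ≤ c ∧ c < 1 / t)
    (x y : X)
    (hAZ2 : Amet A (f x) (f y) ≤ b * (Amet A (f x) x + Amet A (f y) y)) :
    Amet A (f x) (f y) ≤
      (b / (1 - b * ((t : ℝ) - 1))) * Amet A x y +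
      ((t : ℝ) * b / (1 - b * ((t : ℝ) - 1))) * Amet A (f x) x := by
  have htpos : 0 < t := by omega
  have htR : (2:ℝ) ≤ (t:ℝ) := by exact_mod_cast ht
  set k : Fin t := ⟨t - 1, by omega⟩ with hk
  -- Amet of equal points is 0
  have hzero : ∀ u : X, Amet A u u = 0 := by
    intro u
    apply (hA2 _).mpr
    intro i j
    simp only [ite_self]
  -- triangle inequality
  have tri : ∀ u v w : X, Amet A u v ≤ ((t:ℝ) - 1) * Amet A u w + Amet A v w := by
    intro u v w
    have h := hA3 (fun j => if (j : ℕ) = t - 1 then v else u) w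
    have hsum : ∑ i : Fin t, Amet A (if (i : ℕ) = t - 1 then v else u) w
        = ((t:ℝ) - 1) * Amet A u w + Amet A v w := by
      rw [← Finset.sum_erase_add _ _ (Finset.mem_univ k)]
      have h1 : ∑ i ∈ Finset.univ.erase k, Amet A (if (i : ℕ) = t - 1 then v else u) w
          = ((t:ℝ) - 1) * Amet A u w := by
        rw [Finset.sum_congr rfl (fun i hi => ?_), Finset.sum_const, Finset.card_erase_of_mem (Finset.mem_univ k)]
        · simp only [Finset.card_univ, Fintype.card_fin, nsmul_eq_mul]
          have : ((t - 1 : ℕ) : ℝ) = (t:ℝ) - 1 := by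
            have := htpos; push_cast [Nat.cast_sub (by omega : 1 ≤ t)]; ring
          rw [this]
        · have hik : i ≠ k := (Finset.mem_erase.mp hi).1
          have : (i : ℕ) ≠ t - 1 := by
            intro hc; exact hik (Fin.ext hc)
          simp [this]
      have h2 : (if ((k : Fin t) : ℕ) = t - 1 then v else u) = v := by simp [hk]
      rw [h1, h2]
    calc Amet A u v = A (fun j => if (j : ℕ) = t - 1 then v else u) := rfl
      _ ≤ _ := h
      _ = _ := hsum
  -- symmetry
  have symm : ∀ u v : X, Amet A u v = Amet A v u := by
    have half : ∀ u v : X, Amet A u v ≤ Amet A v u := by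
      intro u v
      have := tri u v u
      rw [hzero u] at this
      linarith
    intro u v; exact le_antisymm (half u v) (half v u)
  set D := Amet A (f x) (f y) with hD
  set P := Amet A (f x) x with hP
  set Q := Amet A x y with hQ
  have h1 : Amet A (f y) y ≤ ((t:ℝ) - 1) * D + Amet A y (f x) := by
    have := tri (f y) y (f x)
    rw [symm (f y) (f x)] at this
    linarith
  have h2 : Amet A y (f x) ≤ ((t:ℝ) - 1) * P + Q := by
    have := tri (f x) y x
    rw [symm y x] at this
    rw [symm y (f x)]
    linarith
  have hfyy : Amet A (f y) y ≤ ((t:ℝ) - 1) * D + ((t:ℝ) - 1) * P + Q := by linarith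
  have hkey : D ≤ b * (P + (((t:ℝ) - 1) * D + ((t:ℝ) - 1) * P + Q)) := by
    have hb0 := hb.1
    calc D ≤ b * (P + Amet A (f y) y) := hAZ2
      _ ≤ _ := by nlinarith
  have hpos : 0 < 1 - b * ((t:ℝ) - 1) := by
    have hb2 := hb.2
    have : b * (t:ℝ) < 1 := by
      rw [lt_div_iff₀ (by linarith : (0:ℝ) < (t:ℝ))] at hb2
      linarith
    nlinarith [hb.1]
  rw [div_mul_eq_mul_div, div_mul_eq_mul_div, ← add_div, le_div_iff₀ hpos]
  nlinarith [hkey]
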